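/- For the two-stage selection problem with a single scenario c, the optimal value equals the value of a nominal selection problem with costs min{C_i, c_i}: min_{x∈X'} (C^T x + min_{y∈X(x)} c^T y) = min_{z∈X} ∑_i min{C_i, c_i} z_i, where X = {z ∈ {0,1}^n : ∑_i z_i = p}. -/

import Mathlib

/-- The two-stage selection problem with a single scenario equals a nominal
selection problem with costs `min{Cᵢ, cᵢ}`. -/
theorem stmt_8 (n p : ℕ) (hp : p ≤ n) (C c : Fin n → ℝ)
    (hC : ∀ i, 0 ≤ C i) (hc : ∀ i, 0 ≤ c i) :
    sInf {v : ℝ | ∃ S : Finset (Fin n), S.card ≤ p ∧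
        v = ∑ i ∈ S, C i + sInf {u : ℝ | ∃ T : Finset (Fin n),
          Disjoint S T ∧ (S ∪ T).card = p ∧ u = ∑ i ∈ T, c i}}
      = sInf {v : ℝ | ∃ Z : Finset (Fin n), Z.card = p ∧
          v = ∑ i ∈ Z, min (C i) (c i)} := by
  -- abbreviations
  set inner : Finset (Fin n) → Set ℝ := fun S =>
    {u : ℝ | ∃ T : Finset (Fin n),
      Disjoint S T ∧ (S ∪ T).card = p ∧ u = ∑ i ∈ T, c i} with hinner
  set L : Set ℝ := {v : ℝ | ∃ S : Finset (Fin n), S.card ≤ p ∧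
      v = ∑ i ∈ S, C i + sInf (inner S)} with hL
  set R : Set ℝ := {v : ℝ | ∃ Z : Finset (Fin n), Z.card = p ∧
      v = ∑ i ∈ Z, min (C i) (c i)} with hR
  -- finiteness facts
  have hinner_fin : ∀ S, (inner S).Finite := by
    intro S
    apply Set.Finite.subset (Set.finite_range (fun T : Finset (Fin n) => ∑ i ∈ T, c i))
    rintro u ⟨T, _, _, rfl⟩; exact ⟨T, rfl⟩
  have hL_fin : L.Finite := by
    apply Set.Finite.subset (Set.finite_range
      (fun S : Finset (Fin n) => ∑ i ∈ S, C i + sInf (inner S)))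
    rintro v ⟨S, _, rfl⟩; exact ⟨S, rfl⟩
  have hR_fin : R.Finite := by
    apply Set.Finite.subset (Set.finite_range
      (fun Z : Finset (Fin n) => ∑ i ∈ Z, min (C i) (c i)))
    rintro v ⟨Z, _, rfl⟩; exact ⟨Z, rfl⟩
  -- inner nonemptiness
  have hinner_ne : ∀ S : Finset (Fin n), S.card ≤ p → (inner S).Nonempty := by
    intro S hS
    have hcompl : p - S.card ≤ Sᶜ.card := by
      rw [Finset.card_compl, Fintype.card_fin]
      omega
    obtain ⟨T, hTsub, hTcard⟩ := Finset.exists_subset_card_eq (s := Sᶜ) (n := p - S.card) hcompl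
    have hdj : Disjoint S T := disjoint_compl_right.mono_right hTsub
    refine ⟨∑ i ∈ T, c i, T, hdj, ?_, rfl⟩
    rw [Finset.card_union_of_disjoint hdj, hTcard]
    omega
  -- R nonempty
  have hR_ne : R.Nonempty := by
    obtain ⟨Z, _, hZcard⟩ := Finset.exists_subset_card_eq (s := (Finset.univ : Finset (Fin n))) (n := p)
      (by simpa using hp)
    exact ⟨_, Z, hZcard, rfl⟩
  -- L nonempty
  have hL_ne : L.Nonempty := ⟨_, ∅, Nat.zero_le p, rfl⟩
  apply le_antisymm
  · -- sInf L ≤ sInf R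
    apply le_csInf hR_ne
    rintro v ⟨Z, hZcard, rfl⟩
    set S : Finset (Fin n) := Z.filter (fun i => C i ≤ c i) with hSdef
    set T : Finset (Fin n) := Z.filter (fun i => ¬ C i ≤ c i) with hTdef
    have hdisj : Disjoint S T := Finset.disjoint_filter_filter_not Z Z _
    have hunion : S ∪ T = Z := Finset.filter_union_filter_not_eq _ Z
    have hScard : S.card ≤ p := by
      rw [← hZcard]; exact Finset.card_le_card (Finset.filter_subset _ _)
    have hTmem : (∑ i ∈ T, c i) ∈ inner S :=
      ⟨T, hdisj, by rw [hunion, hZcard], rfl⟩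
    have hsplit : ∑ i ∈ Z, min (C i) (c i) = ∑ i ∈ S, C i + ∑ i ∈ T, c i := by
      rw [← hunion, Finset.sum_union hdisj]
      congr 1
      · apply Finset.sum_congr rfl
        intro i hi
        rw [hSdef, Finset.mem_filter] at hi
        exact min_eq_left hi.2
      · apply Finset.sum_congr rfl
        intro i hi
        rw [hTdef, Finset.mem_filter] at hi
        exact min_eq_right (le_of_not_ge hi.2)
    have hmem : (∑ i ∈ S, C i + sInf (inner S)) ∈ L := ⟨S, hScard, rfl⟩
    refine csInf_le_of_le hL_fin.bddBelow hmem ?_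
    rw [hsplit]
    exact add_le_add_right (csInf_le (hinner_fin S).bddBelow hTmem) _
  · -- sInf R ≤ sInf L
    apply le_csInf hL_ne
    rintro v ⟨S, hScard, rfl⟩
    have hattain : sInf (inner S) ∈ inner S :=
      (hinner_ne S hScard).csInf_mem (hinner_fin S)
    obtain ⟨T, hdisj, hcard, hval⟩ := hattain
    have hmemR : (∑ i ∈ S ∪ T, min (C i) (c i)) ∈ R := ⟨S ∪ T, hcard, rfl⟩
    refine csInf_le_of_le hR_fin.bddBelow hmemR ?_
    rw [Finset.sum_union hdisj, hval]
    exact add_le_add (Finset.sum_le_sum fun i _ => min_le_left _ _)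
      (Finset.sum_le_sum fun i _ => min_le_right _ _)
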